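/- Let G ⊆ S_n and H ⊆ S_m be subgroups of symmetric groups, and let cpms(G,H) be the set of completely positive maps f : ℂ^{n×n} → ℂ^{m×m} such that the composite M ↦ H·(f(G·M)) equals f. With the Löwner order (f ⊑ g iff g − f is completely positive), cpms(G,H) is a bounded directed-complete partial order: the zero map is its minimum element, and every directed subset of cpms(G,H) that has an upper bound in cpms(G,H) has a least upper bound in cpms(G,H). -/

import Mathlib

namespace QCPM
open scoped ComplexOrder

noncomputable section

/-- The permutation matrix `P_g` of a permutation `g` of `{0,…,n−1}`:
`P_g e_j = e_{g j}`. -/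
def permMatrix (n : ℕ) (g : Equiv.Perm (Fin n)) : Matrix (Fin n) (Fin n) ℂ :=
  fun i j => if i = g j then 1 else 0

/-- The action `g · M := P_g M P_g⁻¹` of a permutation on `ℂ^{n×n}`. -/
def permAct (n : ℕ) (g : Equiv.Perm (Fin n)) (M : Matrix (Fin n) (Fin n) ℂ) :
    Matrix (Fin n) (Fin n) ℂ :=
  permMatrix n g * M * (permMatrix n g)⁻¹

/-- The action `G · M := (1/#G) ∑_{g ∈ G} g · M` of a subgroup of `S_n` on `ℂ^{n×n}`. -/
def groupAct (n : ℕ) (G : Subgroup (Equiv.Perm (Fin n))) (M : Matrix (Fin n) (Fin n) ℂ) :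
    Matrix (Fin n) (Fin n) ℂ :=
  (Nat.card G : ℂ)⁻¹ • ∑ᶠ g : G, permAct n (g : Equiv.Perm (Fin n)) M

/-- `F ⊗ id_k`, via the lexicographic (Kronecker–product) identification
`ℂ^{n×n} ⊗ ℂ^{k×k} ≅ ℂ^{nk×nk}`. -/
def tensorId {n m : ℕ} (F : Matrix (Fin n) (Fin n) ℂ → Matrix (Fin m) (Fin m) ℂ) (k : ℕ)
    (M : Matrix (Fin (n * k)) (Fin (n * k)) ℂ) : Matrix (Fin (m * k)) (Fin (m * k)) ℂ :=
  fun r c =>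
    F (fun a b => M (finProdFinEquiv (a, (finProdFinEquiv.symm r).2))
                    (finProdFinEquiv (b, (finProdFinEquiv.symm c).2)))
      (finProdFinEquiv.symm r).1 (finProdFinEquiv.symm c).1

/-- A map `F : ℂ^{n×n} → ℂ^{m×m}` is completely positive if for every `k ≥ 1`,
`F ⊗ id_k` sends positive semidefinite matrices to positive semidefinite matrices. -/
def IsCompletelyPositive {n m : ℕ}
    (F : Matrix (Fin n) (Fin n) ℂ → Matrix (Fin m) (Fin m) ℂ) : Prop :=
  ∀ k : ℕ, 1 ≤ k → ∀ M : Matrix (Fin (n * k)) (Fin (n * k)) ℂ,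
    M.PosSemidef → (tensorId F k M).PosSemidef

/-- The Löwner order on maps `ℂ^{n×n} → ℂ^{m×m}`: `f ⊑ g` iff `g − f` is completely
positive. -/
def Loewner {n m : ℕ} (f g : Matrix (Fin n) (Fin n) ℂ → Matrix (Fin m) (Fin m) ℂ) : Prop :=
  IsCompletelyPositive (fun M => g M - f M)

/-- `cpms(G,H)`: completely positive (linear) maps invariant under the actions of the
subgroups `G ⊆ S_n` and `H ⊆ S_m`. -/
def cpms {n m : ℕ} (G : Subgroup (Equiv.Perm (Fin n))) (H : Subgroup (Equiv.Perm (Fin m))) :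
    Set (Matrix (Fin n) (Fin n) ℂ → Matrix (Fin m) (Fin m) ℂ) :=
  {f | IsLinearMap ℂ f ∧ IsCompletelyPositive f ∧
    (fun M => groupAct m H (f (groupAct n G M))) = f}

/-- Kronecker product of square matrices, with the lexicographic identification of
indices. -/
def kron {a b : ℕ} (A : Matrix (Fin a) (Fin a) ℂ) (B : Matrix (Fin b) (Fin b) ℂ) :
    Matrix (Fin (a * b)) (Fin (a * b)) ℂ :=
  fun r c => A (finProdFinEquiv.symm r).1 (finProdFinEquiv.symm c).1 *
             B (finProdFinEquiv.symm r).2 (finProdFinEquiv.symm c).2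

/-- Componentwise action of a pair of subgroups `G ⊆ S_a`, `H ⊆ S_b` on `ℂ^{ab×ab}`:
`(G×H)·M := (1/(#G·#H)) ∑_{g∈G,h∈H} (P_g ⊗ P_h) M (P_g ⊗ P_h)⁻¹`. -/
def pairAct {a b : ℕ} (G : Subgroup (Equiv.Perm (Fin a))) (H : Subgroup (Equiv.Perm (Fin b)))
    (M : Matrix (Fin (a * b)) (Fin (a * b)) ℂ) : Matrix (Fin (a * b)) (Fin (a * b)) ℂ :=
  ((Nat.card G : ℂ) * (Nat.card H : ℂ))⁻¹ •
    ∑ᶠ g : G, ∑ᶠ h : H,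
      kron (permMatrix a (g : Equiv.Perm (Fin a))) (permMatrix b (h : Equiv.Perm (Fin b))) * M *
        (kron (permMatrix a (g : Equiv.Perm (Fin a))) (permMatrix b (h : Equiv.Perm (Fin b))))⁻¹

/-- The commutation (swap) matrix `S ∈ ℂ^{ba×ab}` determined by `S (x ⊗ y) = y ⊗ x`
for `x ∈ ℂ^a`, `y ∈ ℂ^b`.  Its inverse is `swapMat b a`. -/
def swapMat (a b : ℕ) : Matrix (Fin (b * a)) (Fin (a * b)) ℂ :=
  fun r c => if finProdFinEquiv.symm c = Prod.swap (finProdFinEquiv.symm r) then 1 else 0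


open Filter Topology Matrix

variable {n m p q : ℕ}

lemma continuous_entry (i : Fin p) (j : Fin q) :
    Continuous fun A : Matrix (Fin p) (Fin q) ℂ => A i j :=
  (continuous_apply j).comp (continuous_apply i)

lemma continuous_quad (x : Fin p → ℂ) :
    Continuous fun A : Matrix (Fin p) (Fin p) ℂ => star x ⬝ᵥ (A *ᵥ x) := by
  have h : (fun A : Matrix (Fin p) (Fin p) ℂ => star x ⬝ᵥ (A *ᵥ x))
      = fun A => ∑ i, star x i * ∑ j, A i j * x j := rfl
  rw [h]
  refine continuous_finset_sum _ fun i _ => Continuous.mul continuous_const ?_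
  exact continuous_finset_sum _ fun j _ => (continuous_entry i j).mul continuous_const

lemma posSemidef_of_tendsto {ι : Type*} {F : Filter ι} [F.NeBot]
    {A : ι → Matrix (Fin p) (Fin p) ℂ} {L : Matrix (Fin p) (Fin p) ℂ}
    (hT : Tendsto A F (𝓝 L)) (hA : ∀ᶠ i in F, (A i).PosSemidef) : L.PosSemidef := by
  refine Matrix.posSemidef_iff_dotProduct_mulVec.mpr ⟨?_, ?_⟩
  · ext a b
    have h1 : Tendsto (fun i => star ((A i) b a)) F (𝓝 (star (L b a))) :=
      ((continuous_star.comp (continuous_entry b a)).tendsto L).comp hT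
    have h2 : Tendsto (fun i => (A i) a b) F (𝓝 (L a b)) :=
      ((continuous_entry a b).tendsto L).comp hT
    have he : (fun i => star ((A i) b a)) =ᶠ[F] fun i => (A i) a b := by
      filter_upwards [hA] with i hi
      simpa [Matrix.conjTranspose_apply] using congrFun (congrFun hi.1 a) b
    simpa [Matrix.conjTranspose_apply] using tendsto_nhds_unique (h1.congr' he) h2
  · intro x
    have hq : Tendsto (fun i => star x ⬝ᵥ (A i *ᵥ x)) F (𝓝 (star x ⬝ᵥ (L *ᵥ x))) :=
      ((continuous_quad x).tendsto L).comp hT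
    refine ge_of_tendsto hq ?_
    filter_upwards [hA] with i hi
    exact hi.dotProduct_mulVec_nonneg x

lemma tendsto_tensorId {ι : Type*} {F : Filter ι}
    {net : ι → Matrix (Fin n) (Fin n) ℂ → Matrix (Fin m) (Fin m) ℂ}
    {s : Matrix (Fin n) (Fin n) ℂ → Matrix (Fin m) (Fin m) ℂ}
    (hs : ∀ M, Tendsto (fun i => net i M) F (𝓝 (s M))) (k : ℕ)
    (M : Matrix (Fin (n * k)) (Fin (n * k)) ℂ) :
    Tendsto (fun i => tensorId (net i) k M) F (𝓝 (tensorId s k M)) := by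
  refine tendsto_pi_nhds.mpr fun r => ?_
  rw [tendsto_pi_nhds]
  intro c
  exact ((continuous_entry _ _).tendsto _).comp (hs _)

lemma entry_eq (A : Matrix (Fin p) (Fin p) ℂ) (a b : Fin p) :
    A a b = star (Pi.single a (1:ℂ)) ⬝ᵥ (A *ᵥ Pi.single b 1) := by
  simp [dotProduct, Pi.single_apply, apply_ite (star : ℂ → ℂ)]

lemma polarization (A : Matrix (Fin p) (Fin p) ℂ) (x y : Fin p → ℂ) :
    star x ⬝ᵥ (A *ᵥ y) = (4:ℂ)⁻¹ *
      ((star (x+y) ⬝ᵥ (A *ᵥ (x+y))) - (star (x-y) ⬝ᵥ (A *ᵥ (x-y)))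
       + Complex.I * (star (x - Complex.I • y) ⬝ᵥ (A *ᵥ (x - Complex.I • y)))
       - Complex.I * (star (x + Complex.I • y) ⬝ᵥ (A *ᵥ (x + Complex.I • y)))) := by
  simp only [star_add, star_sub, star_smul, Matrix.mulVec_add, Matrix.mulVec_sub,
    Matrix.mulVec_smul, dotProduct_add, dotProduct_sub, add_dotProduct, sub_dotProduct,
    smul_dotProduct, dotProduct_smul, smul_eq_mul, RCLike.star_def, Complex.conj_I]
  linear_combination (2⁻¹ * (star x ⬝ᵥ (A *ᵥ y)) - 2⁻¹ * (star y ⬝ᵥ (A *ᵥ x))) * Complex.I_sq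

/-- outer product matrix `x y*`. -/
def outer {p : ℕ} (x y : Fin p → ℂ) : Matrix (Fin p) (Fin p) ℂ :=
  Matrix.of fun i j => x i * (starRingEnd ℂ) (y j)

lemma outer_polarization (x y : Fin p → ℂ) :
    outer x y = (4:ℂ)⁻¹ •
      (outer (x+y) (x+y) - outer (x-y) (x-y)
        - Complex.I • outer (x - Complex.I • y) (x - Complex.I • y)
        + Complex.I • outer (x + Complex.I • y) (x + Complex.I • y)) := by
  funext i j
  simp only [outer, Matrix.of_apply, Matrix.smul_apply, Matrix.add_apply, Matrix.sub_apply,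
    Pi.add_apply, Pi.sub_apply, Pi.smul_apply, smul_eq_mul, map_add, map_sub, _root_.map_mul,
    Complex.conj_I]
  linear_combination (2⁻¹ * (x i * (starRingEnd ℂ) (y j)) - 2⁻¹ * (y i * (starRingEnd ℂ) (x j))) * Complex.I_sq

lemma outer_posSemidef (w : Fin p → ℂ) : (outer w w).PosSemidef := by
  refine Matrix.posSemidef_iff_dotProduct_mulVec.mpr ⟨?_, ?_⟩
  · ext i j
    simp [outer, Matrix.conjTranspose_apply, Complex.star_def, _root_.map_mul, mul_comm]
  · intro v
    have h : star v ⬝ᵥ (outer w w *ᵥ v) = (star v ⬝ᵥ w) * star (star v ⬝ᵥ w) := by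
      simp only [outer, Matrix.of_apply, Matrix.mulVec, dotProduct, Pi.star_apply, star_sum,
        star_mul', star_star, Complex.star_def, Finset.mul_sum]
      simp only [Complex.conj_conj, Finset.sum_mul]
      rw [Finset.sum_comm]
      refine Finset.sum_congr rfl fun i _ => Finset.sum_congr rfl fun j _ => by ring
    rw [h]
    exact mul_star_self_nonneg _

lemma matrix_eq_sum_outer (M : Matrix (Fin p) (Fin p) ℂ) :
    M = ∑ a : Fin p, ∑ b : Fin p, M a b • outer (Pi.single a (1:ℂ)) (Pi.single b (1:ℂ)) := by
  funext i j
  rw [Matrix.sum_apply]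
  simp [Matrix.sum_apply, outer, Pi.single_apply, apply_ite (starRingEnd ℂ)]


lemma isCP_zero : IsCompletelyPositive
    (fun _ : Matrix (Fin n) (Fin n) ℂ => (0 : Matrix (Fin m) (Fin m) ℂ)) := by
  intro k hk M hM
  have h : tensorId (fun _ : Matrix (Fin n) (Fin n) ℂ => (0 : Matrix (Fin m) (Fin m) ℂ)) k M
      = 0 := by
    funext r c
    simp [tensorId]
  rw [h]
  exact Matrix.PosSemidef.zero

lemma IsCompletelyPositive.add'
    {F G : Matrix (Fin n) (Fin n) ℂ → Matrix (Fin m) (Fin m) ℂ}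
    (hF : IsCompletelyPositive F) (hG : IsCompletelyPositive G) :
    IsCompletelyPositive (fun M => F M + G M) := by
  intro k hk M hM
  have h : tensorId (fun M => F M + G M) k M = tensorId F k M + tensorId G k M := by
    funext r c
    simp [tensorId, Matrix.add_apply]
  rw [h]
  exact (hF k hk M hM).add (hG k hk M hM)

lemma loewner_refl (f : Matrix (Fin n) (Fin n) ℂ → Matrix (Fin m) (Fin m) ℂ) :
    Loewner f f := by
  have h : (fun M => f M - f M) = fun _ : Matrix (Fin n) (Fin n) ℂ =>
      (0 : Matrix (Fin m) (Fin m) ℂ) := by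
    funext M; simp
  unfold Loewner
  rw [h]
  exact isCP_zero

lemma loewner_trans {f g h : Matrix (Fin n) (Fin n) ℂ → Matrix (Fin m) (Fin m) ℂ}
    (h1 : Loewner f g) (h2 : Loewner g h) : Loewner f h := by
  unfold Loewner at *
  have he : (fun M => h M - f M) = fun M => (g M - f M) + (h M - g M) := by
    funext M; abel
  rw [he]
  exact h1.add' h2

lemma divNat_finProdFinEquiv {a k : ℕ} (x : Fin a) (y : Fin k) :
    (finProdFinEquiv (x, y)).divNat = x :=
  congrArg Prod.fst (Equiv.symm_apply_apply finProdFinEquiv (x, y))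

lemma modNat_finProdFinEquiv {a k : ℕ} (x : Fin a) (y : Fin k) :
    (finProdFinEquiv (x, y)).modNat = y :=
  congrArg Prod.snd (Equiv.symm_apply_apply finProdFinEquiv (x, y))

lemma IsCompletelyPositive.posSemidef
    {F : Matrix (Fin n) (Fin n) ℂ → Matrix (Fin m) (Fin m) ℂ}
    (hF : IsCompletelyPositive F) {M : Matrix (Fin n) (Fin n) ℂ} (hM : M.PosSemidef) :
    (F M).PosSemidef := by
  set M' : Matrix (Fin (n * 1)) (Fin (n * 1)) ℂ :=
    M.submatrix (fun r => (finProdFinEquiv.symm r).1) (fun r => (finProdFinEquiv.symm r).1)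
    with hM'
  have hM'p : M'.PosSemidef := hM.submatrix _
  have key : F M = (tensorId F 1 M').submatrix
      (fun a : Fin m => finProdFinEquiv (a, 0)) (fun a : Fin m => finProdFinEquiv (a, 0)) := by
    funext a b
    simp [tensorId, hM', Matrix.submatrix_apply, divNat_finProdFinEquiv, modNat_finProdFinEquiv]
  rw [key]
  exact (hF 1 le_rfl M' hM'p).submatrix _

lemma continuous_groupAct (H : Subgroup (Equiv.Perm (Fin m))) :
    Continuous (groupAct m H) := by
  letI : Fintype H := Fintype.ofFinite H
  unfold groupAct
  refine Continuous.const_smul (g := fun M : Matrix (Fin m) (Fin m) ℂ =>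
    ∑ᶠ g : H, permAct m (g : Equiv.Perm (Fin m)) M) ?_ ((Nat.card H : ℂ)⁻¹)
  have h : (fun M : Matrix (Fin m) (Fin m) ℂ =>
        ∑ᶠ g : H, permAct m (g : Equiv.Perm (Fin m)) M)
      = fun M => ∑ g : H, permAct m (g : Equiv.Perm (Fin m)) M := by
    funext M
    exact finsum_eq_sum_of_fintype _
  rw [h]
  exact continuous_finset_sum _ fun g _ =>
    (continuous_const.matrix_mul continuous_id).matrix_mul continuous_const

lemma groupAct_zero (H : Subgroup (Equiv.Perm (Fin m))) : groupAct m H 0 = 0 := by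
  have h : ∀ g : H, permAct m (g : Equiv.Perm (Fin m)) 0 = 0 := by
    intro g
    simp [permAct]
  simp [groupAct, h]

lemma zero_mem_cpms (G : Subgroup (Equiv.Perm (Fin n))) (H : Subgroup (Equiv.Perm (Fin m))) :
    (fun _ => 0) ∈ cpms G H := by
  refine ⟨⟨fun _ _ => by simp, fun _ _ => by simp⟩, isCP_zero, ?_⟩
  funext M
  exact groupAct_zero H

/-- Index type for a directed set of maps. -/
structure LoewnerIdx {n m : ℕ}
    (D : Set (Matrix (Fin n) (Fin n) ℂ → Matrix (Fin m) (Fin m) ℂ)) where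
  val : Matrix (Fin n) (Fin n) ℂ → Matrix (Fin m) (Fin m) ℂ
  mem : val ∈ D

instance {n m : ℕ} (D : Set (Matrix (Fin n) (Fin n) ℂ → Matrix (Fin m) (Fin m) ℂ)) :
    Preorder (LoewnerIdx D) where
  le f g := Loewner f.val g.val
  le_refl f := loewner_refl f.val
  le_trans _ _ _ h1 h2 := loewner_trans h1 h2


/-- With the Löwner order, `cpms(G,H)` is a bounded directed-complete
partial order: the zero map is its minimum element, and every directed subset of
`cpms(G,H)` that has an upper bound in `cpms(G,H)` has a least upper bound in
`cpms(G,H)`. -/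
theorem cpms_bounded_dcpo (n m : ℕ) (G : Subgroup (Equiv.Perm (Fin n)))
    (H : Subgroup (Equiv.Perm (Fin m))) :
    ((fun _ => 0) ∈ cpms G H) ∧
    (∀ f ∈ cpms G H, Loewner (fun _ => 0) f) ∧
    (∀ D : Set (Matrix (Fin n) (Fin n) ℂ → Matrix (Fin m) (Fin m) ℂ),
      D ⊆ cpms G H → D.Nonempty →
      (∀ f ∈ D, ∀ g ∈ D, ∃ h ∈ D, Loewner f h ∧ Loewner g h) →
      (∃ b ∈ cpms G H, ∀ f ∈ D, Loewner f b) →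
      ∃ s ∈ cpms G H, (∀ f ∈ D, Loewner f s) ∧
        ∀ u ∈ cpms G H, (∀ f ∈ D, Loewner f u) → Loewner s u) := by
  refine ⟨zero_mem_cpms G H, ?_, ?_⟩
  · intro f hf
    show IsCompletelyPositive (fun M => f M - (fun _ => 0) M)
    have h : (fun M => f M - (fun _ => (0 : Matrix (Fin m) (Fin m) ℂ)) M) = f := by
      funext M; simp
    rw [h]
    exact hf.2.1
  · rintro D hD hne hdir ⟨b, hb, hbub⟩
    have hdir' : IsDirected (LoewnerIdx D) (· ≤ ·) := by
      constructor
      intro f g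
      obtain ⟨h, hhD, h1, h2⟩ := hdir f.val f.mem g.val g.mem
      exact ⟨⟨h, hhD⟩, h1, h2⟩
    have hnon : Nonempty (LoewnerIdx D) := by
      obtain ⟨f, hf⟩ := hne
      exact ⟨⟨f, hf⟩⟩
    haveI : (atTop : Filter (LoewnerIdx D)).NeBot := atTop_neBot_iff.mpr ⟨hnon, hdir'⟩
    have hlin : ∀ f : LoewnerIdx D, IsLinearMap ℂ f.val := fun f => (hD f.mem).1
    have hcp : ∀ f : LoewnerIdx D, IsCompletelyPositive f.val := fun f => (hD f.mem).2.1
    have hinv : ∀ f : LoewnerIdx D,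
        (fun M => groupAct m H (f.val (groupAct n G M))) = f.val := fun f => (hD f.mem).2.2
    -- convergence of quadratic forms on psd inputs
    have hquad : ∀ P : Matrix (Fin n) (Fin n) ℂ, P.PosSemidef → ∀ x : Fin m → ℂ,
        ∃ c : ℂ, Filter.Tendsto (fun f : LoewnerIdx D => star x ⬝ᵥ (f.val P *ᵥ x))
          Filter.atTop (nhds c) := by
      intro P hP x
      set r : LoewnerIdx D → ℝ := fun f => (star x ⬝ᵥ (f.val P *ᵥ x)).re with hr
      have hkey : ∀ (f g : LoewnerIdx D), Loewner f.val g.val → r f ≤ r g := by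
        intro f g hfg
        have h1 : ((fun M => g.val M - f.val M) P).PosSemidef :=
          IsCompletelyPositive.posSemidef hfg hP
        have h2 := h1.dotProduct_mulVec_nonneg x
        have h3 : star x ⬝ᵥ ((g.val P - f.val P) *ᵥ x)
            = star x ⬝ᵥ (g.val P *ᵥ x) - star x ⬝ᵥ (f.val P *ᵥ x) := by
          rw [Matrix.sub_mulVec, dotProduct_sub]
        rw [show (fun M => g.val M - f.val M) P = g.val P - f.val P from rfl, h3] at h2
        have h4 := (Complex.le_def.mp h2).1
        simp only [Complex.zero_re, Complex.sub_re] at h4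
        have : (star x ⬝ᵥ (f.val P *ᵥ x)).re ≤ (star x ⬝ᵥ (g.val P *ᵥ x)).re := by linarith
        exact this
      have hmono : Monotone r := fun f g hfg => hkey f g hfg
      have hbdd : BddAbove (Set.range r) := by
        refine ⟨(star x ⬝ᵥ (b P *ᵥ x)).re, ?_⟩
        rintro _ ⟨f, rfl⟩
        have h1 : ((fun M => b M - f.val M) P).PosSemidef :=
          IsCompletelyPositive.posSemidef (hbub f.val f.mem) hP
        have h2 := h1.dotProduct_mulVec_nonneg x
        have h3 : star x ⬝ᵥ ((b P - f.val P) *ᵥ x)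
            = star x ⬝ᵥ (b P *ᵥ x) - star x ⬝ᵥ (f.val P *ᵥ x) := by
          rw [Matrix.sub_mulVec, dotProduct_sub]
        rw [show (fun M => b M - f.val M) P = b P - f.val P from rfl, h3] at h2
        have h4 := (Complex.le_def.mp h2).1
        simp only [Complex.zero_re, Complex.sub_re] at h4
        show r f ≤ _
        rw [hr]
        simp only []
        linarith
      have htend := tendsto_atTop_ciSup hmono hbdd
      refine ⟨((⨆ f, r f : ℝ) : ℂ), ?_⟩
      have hre : (fun f : LoewnerIdx D => star x ⬝ᵥ (f.val P *ᵥ x))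
          = fun f => ((r f : ℝ) : ℂ) := by
        funext f
        have h0 : (0 : ℂ) ≤ star x ⬝ᵥ (f.val P *ᵥ x) :=
          (IsCompletelyPositive.posSemidef (hcp f) hP).dotProduct_mulVec_nonneg x
        have him := (Complex.le_def.mp h0).2
        apply Complex.ext
        · simp [hr]
        · simpa using him.symm
      rw [hre]
      exact (Complex.continuous_ofReal.tendsto _).comp htend
    -- convergence on psd inputs
    have keyPSD : ∀ P : Matrix (Fin n) (Fin n) ℂ, P.PosSemidef →
        ∃ A, Filter.Tendsto (fun f : LoewnerIdx D => f.val P) Filter.atTop (nhds A) := by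
      intro P hP
      choose c hc using hquad P hP
      refine ⟨fun a bb => (4:ℂ)⁻¹ *
        (c ((Pi.single a 1 : Fin m → ℂ) + (Pi.single bb 1 : Fin m → ℂ)) - c ((Pi.single a 1 : Fin m → ℂ) - (Pi.single bb 1 : Fin m → ℂ))
         + Complex.I * c ((Pi.single a 1 : Fin m → ℂ) - Complex.I • (Pi.single bb 1 : Fin m → ℂ))
         - Complex.I * c ((Pi.single a 1 : Fin m → ℂ) + Complex.I • (Pi.single bb 1 : Fin m → ℂ))), ?_⟩
      refine tendsto_pi_nhds.mpr fun a => ?_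
      rw [tendsto_pi_nhds]; intro bb
      have ht := (((((hc ((Pi.single a 1 : Fin m → ℂ) + (Pi.single bb 1 : Fin m → ℂ))).sub
        (hc ((Pi.single a 1 : Fin m → ℂ) - (Pi.single bb 1 : Fin m → ℂ)))).add
        ((hc ((Pi.single a 1 : Fin m → ℂ) - Complex.I • (Pi.single bb 1 : Fin m → ℂ))).const_mul Complex.I)).sub
        ((hc ((Pi.single a 1 : Fin m → ℂ) + Complex.I • (Pi.single bb 1 : Fin m → ℂ))).const_mul Complex.I)).const_mul
        ((4:ℂ)⁻¹))
      exact ht.congr fun f =>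
        ((entry_eq (f.val P) a bb).trans
          (polarization (f.val P) ((Pi.single a 1 : Fin m → ℂ)) ((Pi.single bb 1 : Fin m → ℂ)))).symm
    -- convergence everywhere
    have keyAll : ∀ M : Matrix (Fin n) (Fin n) ℂ,
        ∃ A, Filter.Tendsto (fun f : LoewnerIdx D => f.val M) Filter.atTop (nhds A) := by
      have hadd : ∀ M N : Matrix (Fin n) (Fin n) ℂ,
          (∃ A, Filter.Tendsto (fun f : LoewnerIdx D => f.val M) Filter.atTop (nhds A)) →
          (∃ A, Filter.Tendsto (fun f : LoewnerIdx D => f.val N) Filter.atTop (nhds A)) →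
          (∃ A, Filter.Tendsto (fun f : LoewnerIdx D => f.val (M + N)) Filter.atTop (nhds A)) := by
        rintro M N ⟨A, hA⟩ ⟨B, hB⟩
        refine ⟨A + B, ?_⟩
        have he : (fun f : LoewnerIdx D => f.val (M + N)) = fun f => f.val M + f.val N := by
          funext f; exact (hlin f).map_add M N
        rw [he]; exact hA.add hB
      have hsub : ∀ M N : Matrix (Fin n) (Fin n) ℂ,
          (∃ A, Filter.Tendsto (fun f : LoewnerIdx D => f.val M) Filter.atTop (nhds A)) →
          (∃ A, Filter.Tendsto (fun f : LoewnerIdx D => f.val N) Filter.atTop (nhds A)) →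
          (∃ A, Filter.Tendsto (fun f : LoewnerIdx D => f.val (M - N)) Filter.atTop (nhds A)) := by
        rintro M N ⟨A, hA⟩ ⟨B, hB⟩
        refine ⟨A - B, ?_⟩
        have he : (fun f : LoewnerIdx D => f.val (M - N)) = fun f => f.val M - f.val N := by
          funext f; exact (hlin f).map_sub M N
        rw [he]; exact hA.sub hB
      have hzero : ∃ A, Filter.Tendsto (fun f : LoewnerIdx D => f.val 0) Filter.atTop (nhds A) := by
        refine ⟨0, ?_⟩
        have he : (fun f : LoewnerIdx D => f.val 0) = fun _ => 0 := by
          funext f; exact (hlin f).map_zero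
        rw [he]; exact tendsto_const_nhds
      have hsmul : ∀ (t : ℂ) (M : Matrix (Fin n) (Fin n) ℂ),
          (∃ A, Filter.Tendsto (fun f : LoewnerIdx D => f.val M) Filter.atTop (nhds A)) →
          (∃ A, Filter.Tendsto (fun f : LoewnerIdx D => f.val (t • M)) Filter.atTop (nhds A)) := by
        rintro t M ⟨A, hA⟩
        refine ⟨t • A, ?_⟩
        have he : (fun f : LoewnerIdx D => f.val (t • M)) = fun f => t • f.val M := by
          funext f; exact (hlin f).map_smul t M
        rw [he]; exact hA.const_smul t
      have houter : ∀ x y : Fin n → ℂ,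
          ∃ A, Filter.Tendsto (fun f : LoewnerIdx D => f.val (outer x y)) Filter.atTop (nhds A) := by
        intro x y
        rw [outer_polarization x y]
        exact hsmul _ _ (hadd _ _ (hsub _ _ (hsub _ _
          (keyPSD _ (outer_posSemidef _)) (keyPSD _ (outer_posSemidef _)))
          (hsmul _ _ (keyPSD _ (outer_posSemidef _))))
          (hsmul _ _ (keyPSD _ (outer_posSemidef _))))
      intro M
      rw [matrix_eq_sum_outer M]
      refine Finset.sum_induction _
        (fun K => ∃ A, Filter.Tendsto (fun f : LoewnerIdx D => f.val K) Filter.atTop (nhds A))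
        (fun a b ha hb => hadd _ _ ha hb) hzero ?_
      intro a _
      refine Finset.sum_induction _
        (fun K => ∃ A, Filter.Tendsto (fun f : LoewnerIdx D => f.val K) Filter.atTop (nhds A))
        (fun a b ha hb => hadd _ _ ha hb) hzero ?_
      intro bb _
      exact hsmul _ _ (houter _ _)
    choose s hs using keyAll
    have hslin : IsLinearMap ℂ s := by
      constructor
      · intro M N
        have h1 := hs (M + N)
        have he : (fun f : LoewnerIdx D => f.val (M + N)) = fun f => f.val M + f.val N := by
          funext f; exact (hlin f).map_add M N
        rw [he] at h1
        exact tendsto_nhds_unique h1 ((hs M).add (hs N))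
      · intro t M
        have h1 := hs (t • M)
        have he : (fun f : LoewnerIdx D => f.val (t • M)) = fun f => t • f.val M := by
          funext f; exact (hlin f).map_smul t M
        rw [he] at h1
        exact tendsto_nhds_unique h1 ((hs M).const_smul t)
    have hscp : IsCompletelyPositive s := by
      intro k hk Mk hMk
      exact posSemidef_of_tendsto (tendsto_tensorId hs k Mk)
        (Filter.Eventually.of_forall fun f => hcp f k hk Mk hMk)
    have hsinv : (fun M => groupAct m H (s (groupAct n G M))) = s := by
      funext M
      have h1 : Filter.Tendsto (fun f : LoewnerIdx D => groupAct m H (f.val (groupAct n G M)))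
          Filter.atTop (nhds (groupAct m H (s (groupAct n G M)))) :=
        ((continuous_groupAct H).tendsto _).comp (hs _)
      have he : (fun f : LoewnerIdx D => groupAct m H (f.val (groupAct n G M)))
          = fun f => f.val M := by
        funext f
        exact congrFun (hinv f) M
      rw [he] at h1
      exact tendsto_nhds_unique h1 (hs M)
    refine ⟨s, ⟨hslin, hscp, hsinv⟩, ?_, ?_⟩
    · intro f hf
      refine fun k hk Mk hMk => ?_
      have hnet : ∀ M' : Matrix (Fin n) (Fin n) ℂ,
          Filter.Tendsto (fun g : LoewnerIdx D => g.val M' - f M') Filter.atTop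
            (nhds (s M' - f M')) := fun M' => (hs M').sub tendsto_const_nhds
      refine posSemidef_of_tendsto (tendsto_tensorId hnet k Mk) ?_
      filter_upwards [Filter.eventually_ge_atTop (⟨f, hf⟩ : LoewnerIdx D)] with g hg
      exact hg k hk Mk hMk
    · intro u hu huub
      refine fun k hk Mk hMk => ?_
      have hnet : ∀ M' : Matrix (Fin n) (Fin n) ℂ,
          Filter.Tendsto (fun g : LoewnerIdx D => u M' - g.val M') Filter.atTop
            (nhds (u M' - s M')) := fun M' => tendsto_const_nhds.sub (hs M')
      refine posSemidef_of_tendsto (tendsto_tensorId hnet k Mk) ?_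
      exact Filter.Eventually.of_forall fun g => (huub g.val g.mem) k hk Mk hMk

end
end QCPM
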